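/- Consider the EDMC dynamics on a connected graph with constant inputs: u_k(i) = u(i) for all k. Assume Δ is an upper bound on the diameter of G (Δ ≥ δ) and x satisfies the EDMC update with Δ + 1 levels. Then for every k ≥ Δ + 1 and every vertex i ∈ V, the top-level state equals the maximum exactly: x_k(i, Δ) = max_{j∈V} u(j), i.e. the steady-state error is zero. -/

import Mathlib

open Finset

/-- EDMC exact consensus with constant inputs (Corollary 2). -/
theorem edmc_steady_state_exact
    {V : Type*} [Fintype V] [Nonempty V] [DecidableEq V]
    (G : SimpleGraph V) [DecidableRel G.Adj] (hconn : G.Connected)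
    (u : V → ℝ)
    (δ : ℕ) (hδ : δ = Finset.univ.sup fun p : V × V => G.dist p.1 p.2)
    (Δ : ℕ) (hΔ : δ ≤ Δ)
    (x : ℕ → V → Fin (Δ + 1) → ℝ)
    (hx0 : ∀ k i, x (k + 1) i 0 = u i)
    (hx : ∀ k i (ℓ : Fin Δ), x (k + 1) i ℓ.succ =
      (insert i (G.neighborFinset i)).sup' (insert_nonempty i _)
        (fun j => x k j ℓ.castSucc)) :
    ∀ k, Δ + 1 ≤ k → ∀ i : V,
      x k i (Fin.last Δ) = Finset.univ.sup' univ_nonempty u := by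
  have hball : ∀ (ℓ : ℕ) (hℓ : ℓ ≤ Δ) (k : ℕ) (i : V),
      x (k + ℓ + 1) i ⟨ℓ, Nat.lt_succ_of_le hℓ⟩ =
      (Finset.univ.filter fun j => G.dist i j ≤ ℓ).sup'
        ⟨i, by simp [SimpleGraph.dist_self]⟩ u := by
    intro ℓ
    induction ℓ with
    | zero =>
      intro _ k i
      have hset : (Finset.univ.filter fun j => G.dist i j ≤ 0) = {i} := by
        ext j
        simp [Nat.le_zero, hconn.dist_eq_zero_iff, eq_comm]
      exact (hx0 k i).trans ((Finset.sup'_singleton (f := u) (b := i)).symm.trans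
        (Finset.sup'_congr _ hset (fun _ _ => rfl)).symm)
    | succ ℓ ih =>
      intro hℓ k i
      have hℓ' : ℓ < Δ := hℓ
      have hstep := hx (k + ℓ + 1) i ⟨ℓ, hℓ'⟩
      have heq : x (k + (ℓ + 1) + 1) i ⟨ℓ + 1, Nat.lt_succ_of_le hℓ⟩ =
          (insert i (G.neighborFinset i)).sup' (insert_nonempty i _)
            (fun j => x (k + ℓ + 1) j ⟨ℓ, Nat.lt_succ_of_lt hℓ'⟩) := by
        exact hstep
      rw [heq]
      have hIH : ∀ j, x (k + ℓ + 1) j ⟨ℓ, Nat.lt_succ_of_lt hℓ'⟩ =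
          (Finset.univ.filter fun m => G.dist j m ≤ ℓ).sup' ⟨j, by simp [SimpleGraph.dist_self]⟩ u := by
        intro j
        exact ih (le_of_lt hℓ') k j
      apply le_antisymm
      · apply Finset.sup'_le
        intro j hj
        rw [hIH j]
        apply Finset.sup'_le
        intro m hm
        simp only [Finset.mem_filter, Finset.mem_univ, true_and] at hm
        have hij : G.dist i j ≤ 1 := by
          rcases Finset.mem_insert.mp hj with h | h
          · subst h; simp [SimpleGraph.dist_self]
          · rw [SimpleGraph.mem_neighborFinset] at h
            exact le_of_eq (SimpleGraph.dist_eq_one_iff_adj.mpr h)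
        have him : G.dist i m ≤ ℓ + 1 :=
          le_trans (hconn.dist_triangle (v := j)) (by omega)
        exact Finset.le_sup' u (by simp [him])
      · apply Finset.sup'_le
        intro m hm
        simp only [Finset.mem_filter, Finset.mem_univ, true_and] at hm
        rcases Nat.eq_zero_or_pos (G.dist i m) with h0 | hpos
        · have : i = m := hconn.dist_eq_zero_iff.mp h0
          subst this
          refine le_trans ?_ (Finset.le_sup' _ (Finset.mem_insert_self i _))
          rw [hIH i]
          exact Finset.le_sup' u (by simp [SimpleGraph.dist_self, Nat.zero_le])
        · obtain ⟨p, hp⟩ := (hconn i m).exists_walk_length_eq_dist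
          cases p with
          | nil => rw [SimpleGraph.dist_self] at hpos; omega
          | cons h q =>
            rename_i j
            have hq : G.dist j m ≤ ℓ := by
              have := SimpleGraph.dist_le q
              simp [SimpleGraph.Walk.length_cons] at hp
              omega
            refine le_trans ?_ (Finset.le_sup' _
              (Finset.mem_insert_of_mem ((SimpleGraph.mem_neighborFinset G i j).mpr h)))
            rw [hIH j]
            exact Finset.le_sup' u (by simp [hq])
  intro k hk i
  obtain ⟨k', rfl⟩ : ∃ k', k = k' + Δ + 1 := ⟨k - Δ - 1, by omega⟩
  have := hball Δ le_rfl k' i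
  have hlast : (Fin.last Δ) = (⟨Δ, Nat.lt_succ_of_le le_rfl⟩ : Fin (Δ + 1)) := rfl
  rw [hlast, this]
  have hset : (Finset.univ.filter fun j => G.dist i j ≤ Δ) = Finset.univ := by
    ext j
    simp only [Finset.mem_filter, Finset.mem_univ, true_and, iff_true]
    calc G.dist i j ≤ δ := hδ ▸ Finset.le_sup (f := fun p : V × V => G.dist p.1 p.2)
          (Finset.mem_univ (i, j))
      _ ≤ Δ := hΔ
  exact Finset.sup'_congr _ hset fun _ _ => rfl
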